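/- A graph M is strong 2-chromatic-choosable if and only if M is isomorphic to K_2, and M is strong 3-chromatic-choosable if and only if M is an odd cycle. -/

import Mathlib

open SimpleGraph

/-- A proper coloring of `G` from the list assignment `L`. -/
def IsProperListColoring {V : Type*} (G : SimpleGraph V) (L : V → Finset ℕ) (f : V → ℕ) : Prop :=
  (∀ v, f v ∈ L v) ∧ ∀ ⦃v w⦄, G.Adj v w → f v ≠ f w

/-- `G` is `k`-choosable: every `k`-assignment admits a proper coloring. -/
def Choosable {V : Type*} (G : SimpleGraph V) (k : ℕ) : Prop :=
  ∀ L : V → Finset ℕ, (∀ v, (L v).card = k) → ∃ f, IsProperListColoring G L f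

/-- The list chromatic number: the least `k` such that `G` is `k`-choosable. -/
noncomputable def listChromaticNumber {V : Type*} (G : SimpleGraph V) : ℕ :=
  sInf {k | Choosable G k}

/-- The list color function `P_ℓ(G,k)`: the minimum number of proper `L`-colorings
over all `k`-assignments `L`. -/
noncomputable def listColorFunction {V : Type*} (G : SimpleGraph V) (k : ℕ) : ℕ :=
  sInf {n | ∃ L : V → Finset ℕ, (∀ v, (L v).card = k) ∧
    n = Nat.card {f : V → ℕ // IsProperListColoring G L f}}

/-- `G` is strong `k`-chromatic-choosable: `χ(G) = k` and every `(k-1)`-assignment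
admitting no proper coloring is constant. -/
def StrongChromChoosable {V : Type*} (G : SimpleGraph V) (k : ℕ) : Prop :=
  G.chromaticNumber = k ∧
  ∀ L : V → Finset ℕ, (∀ v, (L v).card = k - 1) →
    (¬ ∃ f, IsProperListColoring G L f) → ∀ v w, L v = L w



section AuxStrongChrom

open Fin.NatCast Fin.CommRing


lemma parity_false {V : Type*} {M : SimpleGraph V} {u : ℕ → V} {n : ℕ} (hodd : Odd n)
    (hclosed : u n = u 0) (hadj : ∀ i < n, M.Adj (u i) (u (i+1)))
    {f : V → ℕ} {a b : ℕ} (hf : ∀ i ≤ n, f (u i) = a ∨ f (u i) = b)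
    (hne : ∀ i < n, f (u i) ≠ f (u (i+1))) : False := by
  have key : ∀ i, i ≤ n → (f (u i) = f (u 0) ↔ Even i) := by
    intro i
    induction i with
    | zero => simp
    | succ i ih =>
      intro hi
      have h1 := ih (by omega)
      have h2 := hne i (by omega)
      have h3 := hf i (by omega)
      have h4 := hf (i+1) hi
      have h5 := hf 0 (by omega)
      rw [Nat.even_add_one]
      by_cases hP : Even i
      · have hx : f (u i) = f (u 0) := h1.mpr hP
        simp only [hP, not_true, iff_false]
        intro hcon
        exact h2 (by rw [hcon, ← hx])
      · have hx : f (u i) ≠ f (u 0) := fun hh => hP (h1.mp hh)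
        simp only [hP, not_false_iff, iff_true]
        rcases h3 with h3|h3 <;> rcases h4 with h4|h4 <;> rcases h5 with h5|h5 <;>
          simp only [h3, h4, h5] at h2 hx ⊢ <;> tauto
  have h6 := (key n le_rfl).mp (by rw [hclosed])
  exact (Nat.not_even_iff_odd.mpr hodd) h6

lemma exists_oddClosedSeq {V : Type*} {M : SimpleGraph V} (h : ¬ M.Colorable 2) :
    ∃ (n : ℕ) (u : ℕ → V), Odd n ∧ u n = u 0 ∧ ∀ i < n, M.Adj (u i) (u (i+1)) := by
  classical
  by_contra hc
  push_neg at hc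
  have hw : ∀ (v : V) (p : M.Walk v v), ¬ Odd p.length := by
    intro v p hp
    obtain ⟨i, hi, hni⟩ := hc p.length (fun i => p.getVert i) hp (by simp)
    exact hni (p.adj_getVert_succ hi)
  have hpar : ∀ {x y : V} (p q : M.Walk x y), (Even p.length ↔ Even q.length) := by
    intro x y p q
    have h1 := hw x (p.append q.reverse)
    rw [Nat.not_odd_iff_even, Walk.length_append, Walk.length_reverse, Nat.even_add] at h1
    exact h1
  apply h
  refine ⟨Coloring.mk (fun v => if ∃ p : M.Walk (M.connectedComponentMk v).out v, Odd p.length then 1 else 0) ?_⟩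
  intro v w hvw hEq
  have hcomp : M.connectedComponentMk v = M.connectedComponentMk w :=
    ConnectedComponent.connectedComponentMk_eq_of_adj hvw
  set r := (M.connectedComponentMk v).out with hr
  have hrv : M.Reachable r v := ConnectedComponent.exact (by rw [hr]; exact (M.connectedComponentMk v).out_eq)
  have hrw : M.Reachable r w := by
    refine ConnectedComponent.exact ?_
    rw [hr, hcomp]
    exact (M.connectedComponentMk w).out_eq
  obtain ⟨p⟩ := hrv
  obtain ⟨q⟩ := hrw
  have hcomp' : (M.connectedComponentMk w).out = r := by rw [hr, hcomp]
  rw [hcomp'] at hEq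
  have hpq := hpar q (p.concat hvw)
  rw [Walk.length_concat, Nat.even_add_one] at hpq
  by_cases hA : ∃ p' : M.Walk r v, Odd p'.length
  · rw [if_pos hA] at hEq
    have hB : ∃ q' : M.Walk r w, Odd q'.length := by
      by_contra hB
      rw [if_neg hB] at hEq
      simp at hEq
    obtain ⟨p₀, hp₀⟩ := hA
    obtain ⟨q₀, hq₀⟩ := hB
    have hpe : ¬ Even p.length := by
      rw [hpar p p₀]; exact Nat.not_even_iff_odd.mpr hp₀
    have hqe : ¬ Even q.length := by
      rw [hpar q q₀]; exact Nat.not_even_iff_odd.mpr hq₀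
    tauto
  · rw [if_neg hA] at hEq
    have hB : ¬ ∃ q' : M.Walk r w, Odd q'.length := by
      by_contra hB
      rw [if_pos hB] at hEq
      simp at hEq
    have hpe : Even p.length := Nat.not_odd_iff_even.mp (fun ho => hA ⟨p, ho⟩)
    have hqe : Even q.length := Nat.not_odd_iff_even.mp (fun ho => hB ⟨q, ho⟩)
    tauto

lemma support_eq_univ {V : Type*} {M : SimpleGraph V}
    (hstrong : ∀ L : V → Finset ℕ, (∀ v, (L v).card = 2) →
      (¬ ∃ f, IsProperListColoring M L f) → ∀ v w, L v = L w)
    {n : ℕ} {u : ℕ → V} (hodd : Odd n) (hclosed : u n = u 0)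
    (hadj : ∀ i < n, M.Adj (u i) (u (i+1))) :
    ∀ x, ∃ i, i < n ∧ u i = x := by
  classical
  intro x
  by_contra hx
  have hn0 : 0 < n := hodd.pos
  set L : V → Finset ℕ := fun y => if ∃ i, i < n ∧ u i = y then {0, 1} else {2, 3} with hL
  have hcard : ∀ v, (L v).card = 2 := by
    intro v
    simp only [hL]
    split_ifs <;> decide
  have hmem : ∀ i, i ≤ n → ∃ j, j < n ∧ u j = u i := by
    intro i hi
    rcases Nat.lt_or_ge i n with h|h
    · exact ⟨i, h, rfl⟩
    · have : i = n := by omega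
      exact ⟨0, hn0, by rw [this, hclosed]⟩
  have hnocol : ¬ ∃ f, IsProperListColoring M L f := by
    rintro ⟨f, hf1, hf2⟩
    refine parity_false hodd hclosed hadj (f := f) (a := 0) (b := 1) ?_ ?_
    · intro i hi
      have := hf1 (u i)
      simp only [hL, if_pos (hmem i hi)] at this
      simpa [Finset.mem_insert, Finset.mem_singleton] using this
    · intro i hi
      exact hf2 (hadj i hi)
  have heq := hstrong L hcard hnocol x (u 0)
  have h1 : L x = ({2, 3} : Finset ℕ) := by simp only [hL]; rw [if_neg hx]
  have h2 : L (u 0) = ({0, 1} : Finset ℕ) := by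
    simp only [hL]; rw [if_pos ⟨0, hn0, rfl⟩]
  rw [h1, h2] at heq
  exact absurd heq (by decide)


lemma fin_sub_val_one {n : ℕ} (hn : 2 ≤ n) (a b : Fin n) :
    (a - b).val = 1 ↔ (a.val = b.val + 1 ∨ (a.val = 0 ∧ b.val = n - 1)) := by
  have hb : b.val < n := b.isLt
  have ha : a.val < n := a.isLt
  rw [Fin.sub_def]
  simp only
  constructor
  · intro h
    rcases Nat.lt_or_ge (n - b.val + a.val) n with hl|hl
    · rw [Nat.mod_eq_of_lt hl] at h; omega
    · rw [Nat.mod_eq_sub_mod hl, Nat.mod_eq_of_lt (by omega)] at h; omega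
  · rintro (h|⟨h1,h2⟩)
    · have he : n - b.val + a.val = n + 1 := by omega
      rw [he, Nat.add_mod_left, Nat.mod_eq_of_lt (by omega)]
    · have he : n - b.val + a.val = 1 := by omega
      rw [he, Nat.mod_eq_of_lt (by omega)]

lemma cycleGraph_adj_iff {n : ℕ} (hn : 2 ≤ n) (a b : Fin n) :
    (cycleGraph n).Adj a b ↔ (b.val = a.val + 1 ∨ a.val = b.val + 1 ∨
      (a.val = 0 ∧ b.val = n - 1) ∨ (b.val = 0 ∧ a.val = n - 1)) := by
  rw [cycleGraph_adj', fin_sub_val_one hn, fin_sub_val_one hn]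
  tauto

section Claims
variable {V : Type*} {M : SimpleGraph V} {n : ℕ} {u : ℕ → V}

lemma ue_eq (hclosed : u n = u 0) : ∀ k ≤ n, u (k % n) = u k := by
  intro k hk
  rcases Nat.lt_or_ge k n with h|h
  · rw [Nat.mod_eq_of_lt h]
  · have hkn : k = n := by omega
    subst hkn
    rw [Nat.mod_self, hclosed]

lemma ue_adj (hn : 1 ≤ n) (hclosed : u n = u 0)
    (hadj : ∀ i < n, M.Adj (u i) (u (i+1))) :
    ∀ k, M.Adj (u (k % n)) (u ((k+1) % n)) := by
  intro k
  rcases Nat.lt_or_ge n 2 with h2|h2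
  · exfalso
    have hn1 : n = 1 := by omega
    have := hadj 0 (by omega)
    rw [show (0:ℕ)+1 = n by omega, hclosed] at this
    exact M.irrefl this
  have hk : k % n < n := Nat.mod_lt _ (by omega)
  rw [Nat.add_mod k 1 n, Nat.mod_eq_of_lt (show (1:ℕ) < n by omega)]
  rcases Nat.lt_or_ge (k % n + 1) n with h|h
  · rw [Nat.mod_eq_of_lt h]
    exact hadj (k % n) (by omega)
  · have he : k % n + 1 = n := by omega
    rw [he, Nat.mod_self]
    have := hadj (k % n) (by omega)
    rw [he, hclosed] at this
    exact this

lemma claimB (hodd : Odd n) (hclosed : u n = u 0)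
    (hadj : ∀ i < n, M.Adj (u i) (u (i+1)))
    (hmin : ∀ (m : ℕ) (w : ℕ → V), Odd m → w m = w 0 →
      (∀ i < m, M.Adj (w i) (w (i+1))) → n ≤ m) :
    ∀ i j, i < j → j < n → u i ≠ u j := by
  intro i j hij hjn heq
  have hn1 : 1 ≤ n := hodd.pos
  have hue := ue_adj hn1 hclosed hadj
  set m1 := j - i with hm1
  set m2 := n - j + i with hm2
  set v : ℕ → V := fun k => u ((i + k) % n) with hvdef
  set w : ℕ → V := fun k => u ((j + k) % n) with hwdef
  have hvclosed : v m1 = v 0 := by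
    simp only [hvdef]
    rw [show i + m1 = j by omega, Nat.add_zero,
      ue_eq hclosed j (by omega), ue_eq hclosed i (by omega), ← heq]
  have hvadj : ∀ k < m1, M.Adj (v k) (v (k+1)) := by
    intro k hk
    simp only [hvdef]
    rw [show i + (k+1) = (i + k) + 1 by omega]
    exact hue (i + k)
  have hwclosed : w m2 = w 0 := by
    simp only [hwdef]
    rw [show j + m2 = n + i by omega, Nat.add_zero, Nat.add_mod_left,
      ue_eq hclosed i (by omega), ue_eq hclosed j (by omega), heq]
  have hwadj : ∀ k < m2, M.Adj (w k) (w (k+1)) := by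
    intro k hk
    simp only [hwdef]
    rw [show j + (k+1) = (j + k) + 1 by omega]
    exact hue (j + k)
  rcases Nat.even_or_odd m1 with he|ho
  · have hod : Odd m2 := by
      rcases hodd with ⟨t, ht⟩; rcases he with ⟨s, hs⟩
      exact ⟨t - s, by omega⟩
    have := hmin m2 w hod hwclosed hwadj
    omega
  · have := hmin m1 v ho hvclosed hvadj
    omega

lemma claimC (hodd : Odd n) (hclosed : u n = u 0)
    (hadj : ∀ i < n, M.Adj (u i) (u (i+1)))
    (hmin : ∀ (m : ℕ) (w : ℕ → V), Odd m → w m = w 0 →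
      (∀ i < m, M.Adj (w i) (w (i+1))) → n ≤ m)
    {i j : ℕ} (hij : i < j) (hjn : j < n) (hAdj : M.Adj (u i) (u j)) :
    j = i + 1 ∨ (i = 0 ∧ j = n - 1) := by
  by_contra hcon
  push_neg at hcon
  obtain ⟨hne1, hne2⟩ := hcon
  have hn1 : 1 ≤ n := hodd.pos
  have hue := ue_adj hn1 hclosed hadj
  have hji2 : 2 ≤ j - i := by omega
  have hn3 : 3 ≤ n := by omega
  have hji3 : j - i ≤ n - 2 := by
    by_contra hh
    exact hne2 (by omega) (by omega)
  set m1 := j - i + 1 with hm1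
  set m2 := n - j + i + 1 with hm2
  set v : ℕ → V := fun k => if k ≤ j - i then u ((i + k) % n) else u i with hvdef
  set w : ℕ → V := fun k => if k ≤ n - j + i then u ((j + k) % n) else u j with hwdef
  have hvclosed : v m1 = v 0 := by
    simp only [hvdef]
    rw [if_neg (by omega), if_pos (by omega), Nat.add_zero, ue_eq hclosed i (by omega)]
  have hvadj : ∀ k < m1, M.Adj (v k) (v (k+1)) := by
    intro k hk
    simp only [hvdef]
    rcases Nat.lt_or_ge k (j - i) with h1|h1
    · rw [if_pos (by omega), if_pos (by omega), show i + (k+1) = (i+k)+1 by omega]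
      exact hue (i + k)
    · have h2 : k = j - i := by omega
      rw [if_pos (by omega), if_neg (by omega), h2,
        show i + (j - i) = j by omega, ue_eq hclosed j (by omega)]
      exact hAdj.symm
  have hwclosed : w m2 = w 0 := by
    simp only [hwdef]
    rw [if_neg (by omega), if_pos (by omega), Nat.add_zero, ue_eq hclosed j (by omega)]
  have hwadj : ∀ k < m2, M.Adj (w k) (w (k+1)) := by
    intro k hk
    simp only [hwdef]
    rcases Nat.lt_or_ge k (n - j + i) with h1|h1
    · rw [if_pos (by omega), if_pos (by omega), show j + (k+1) = (j+k)+1 by omega]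
      exact hue (j + k)
    · have h2 : k = n - j + i := by omega
      rw [if_pos (by omega), if_neg (by omega), h2,
        show j + (n - j + i) = n + i by omega, Nat.add_mod_left,
        ue_eq hclosed i (by omega)]
      exact hAdj
  rcases Nat.even_or_odd m1 with he|ho
  · have hod : Odd m2 := by
      rcases hodd with ⟨t, ht⟩; rcases he with ⟨s, hs⟩
      exact ⟨t + 1 - s, by omega⟩
    have := hmin m2 w hod hwclosed hwadj
    omega
  · have := hmin m1 v ho hvclosed hvadj
    omega

end Claims


lemma pick_ne {s : Finset ℕ} (hs : s.card = 2) (y : ℕ) : ∃ x, x ∈ s ∧ x ≠ y := by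
  have h2 : 1 < s.card := by omega
  obtain ⟨a, ha, b, hb, hab⟩ := Finset.one_lt_card.mp h2
  by_cases h : a = y
  · exact ⟨b, hb, by rw [← h]; exact hab.symm⟩
  · exact ⟨a, ha, h⟩

lemma chain_const {n : ℕ} [NeZero n] (L : Fin n → Finset ℕ)
    (h : ∀ i : Fin n, L i = L (i + 1)) : ∀ i j : Fin n, L i = L j := by
  have key : ∀ k : ℕ, L (k : Fin n) = L 0 := by
    intro k
    induction k with
    | zero => norm_num
    | succ m ih => rw [show ((m+1:ℕ) : Fin n) = (m : Fin n) + 1 by push_cast; ring, ← h (m : Fin n), ih]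
  intro i j
  rw [← Fin.cast_val_eq_self i, ← Fin.cast_val_eq_self j, key, key]

lemma cycle_greedy {n : ℕ} [NeZero n] (hn : 3 ≤ n) (L : Fin n → Finset ℕ)
    (hcard : ∀ i, (L i).card = 2) {i₀ : Fin n} (hne : L i₀ ≠ L (i₀ + 1)) :
    ∃ f : Fin n → ℕ, (∀ i, f i ∈ L i) ∧
      ∀ i j : Fin n, (cycleGraph n).Adj i j → f i ≠ f j := by
  classical
  have hval1 : (1 : Fin n).val = 1 := by
    rw [← Nat.cast_one, Fin.val_natCast, Nat.mod_eq_of_lt (by omega)]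
  -- get a color in L (i₀+1) \ L i₀
  have hsub : ¬ L (i₀ + 1) ⊆ L i₀ := by
    intro hs
    exact hne (Finset.eq_of_subset_of_card_le hs (by rw [hcard, hcard])).symm
  obtain ⟨c, hc1, hc2⟩ := Finset.not_subset.mp hsub
  -- greedy sequence
  set g : ℕ → ℕ := fun k => Nat.rec c
    (fun m gm => Classical.choose (pick_ne (hcard (i₀ + 1 + ((m+1 : ℕ) : Fin n))) gm)) k
    with hgdef
  have hg0 : g 0 = c := rfl
  have hgs : ∀ m, g (m+1) =
      Classical.choose (pick_ne (hcard (i₀ + 1 + ((m+1 : ℕ) : Fin n))) (g m)) := fun m => rfl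
  have hgmem : ∀ k : ℕ, g k ∈ L (i₀ + 1 + (k : Fin n)) := by
    intro k
    cases k with
    | zero => simpa [hg0] using hc1
    | succ m =>
      rw [hgs m]
      exact (Classical.choose_spec (pick_ne (hcard (i₀ + 1 + ((m+1 : ℕ) : Fin n))) (g m))).1
  have hgne : ∀ m, g (m+1) ≠ g m := by
    intro m
    rw [hgs m]
    exact (Classical.choose_spec (pick_ne (hcard (i₀ + 1 + ((m+1 : ℕ) : Fin n))) (g m))).2
  set f : Fin n → ℕ := fun j => g ((j - (i₀+1)).val) with hfdef
  have hfmem : ∀ j, f j ∈ L j := by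
    intro j
    have := hgmem ((j - (i₀+1)).val)
    rwa [Fin.cast_val_eq_self, add_comm (i₀+1), sub_add_cancel] at this
  have key : ∀ j : Fin n, f j ≠ f (j + 1) := by
    intro j
    set k := (j - (i₀+1)).val with hk
    have hkn : k < n := (j - (i₀+1)).isLt
    have hsucc : (j + 1 - (i₀+1)) = (j - (i₀+1)) + 1 := by ring
    have hsval : (j + 1 - (i₀+1)).val = (k + 1) % n := by
      rw [hsucc, Fin.add_def, hval1]
    rcases Nat.lt_or_ge k (n - 1) with h1|h1
    · have : (j + 1 - (i₀+1)).val = k + 1 := by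
        rw [hsval, Nat.mod_eq_of_lt (by omega)]
      simp only [hfdef]
      rw [this]
      exact (hgne k).symm
    · have hk1 : k = n - 1 := by omega
      have hzero : (j + 1 - (i₀+1)).val = 0 := by
        rw [hsval, hk1, show n - 1 + 1 = n by omega, Nat.mod_self]
      have hji : j + 1 = i₀ + 1 := by
        have : j + 1 - (i₀+1) = 0 := Fin.ext hzero
        rwa [sub_eq_zero] at this
      have hfj1 : f (j+1) = c := by
        simp only [hfdef]
        rw [hzero, hg0]
      have hj : j = i₀ := by
        have := hji
        exact add_right_cancel this
      intro hcon
      apply hc2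
      rw [← hfj1, ← hcon, hj]
      exact hfmem i₀
  refine ⟨f, hfmem, ?_⟩
  intro i j hadj
  rw [cycleGraph_adj'] at hadj
  have honef : ∀ a b : Fin n, (a - b).val = 1 → a = b + 1 := by
    intro a b hab
    have : a - b = 1 := Fin.ext (by rw [hab, hval1])
    rw [sub_eq_iff_eq_add] at this
    rw [this, add_comm]
  rcases hadj with h|h
  · rw [honef i j h]
    exact (key j).symm
  · rw [honef j i h]
    exact key i

lemma walk_of_seq {V : Type*} {M : SimpleGraph V} (u : ℕ → V) :
    ∀ m : ℕ, (∀ i < m, M.Adj (u i) (u (i+1))) →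
      ∃ p : M.Walk (u 0) (u m), p.length = m := by
  intro m
  induction m with
  | zero => exact fun _ => ⟨Walk.nil, rfl⟩
  | succ m ih =>
    intro hadj
    obtain ⟨p, hp⟩ := ih (fun i hi => hadj i (by omega))
    exact ⟨p.concat (hadj m (by omega)), by rw [Walk.length_concat, hp]⟩

lemma cycle_colorable_three {n : ℕ} (hn : 3 ≤ n) : (cycleGraph n).Colorable 3 := by
  set Cv : Fin n → ℕ := fun i => if i.val = n - 1 then 2 else i.val % 2 with hCv
  refine ⟨Coloring.mk (fun i => (⟨Cv i, by simp only [hCv]; split_ifs <;> omega⟩ : Fin 3)) ?_⟩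
  intro a b hadj hC
  rw [cycleGraph_adj_iff (by omega)] at hadj
  have hCeq : Cv a = Cv b := congrArg Fin.val hC
  have ha : a.val < n := a.isLt
  have hb : b.val < n := b.isLt
  simp only [hCv] at hCeq
  split_ifs at hCeq <;> omega

section IsoCycle
variable {V : Type*} {M : SimpleGraph V} {n : ℕ}

lemma seq_of_iso (hn : 3 ≤ n) (e : M ≃g cycleGraph n) :
    ∃ u : ℕ → V, u n = u 0 ∧ (∀ i, M.Adj (u i) (u (i+1))) ∧
      (∀ i : Fin n, u i.val = e.symm i) := by
  haveI : NeZero n := ⟨by omega⟩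
  have hval1 : (1 : Fin n).val = 1 := by
    rw [← Nat.cast_one, Fin.val_natCast, Nat.mod_eq_of_lt (by omega)]
  refine ⟨fun k => e.symm ((k : ℕ) : Fin n), ?_, ?_, ?_⟩
  · show e.symm ((n : ℕ) : Fin n) = e.symm ((0 : ℕ) : Fin n)
    rw [Fin.natCast_self, Nat.cast_zero]
  · intro i
    have hc : ((i+1 : ℕ) : Fin n) = ((i : ℕ) : Fin n) + 1 := by push_cast; ring
    show M.Adj (e.symm ((i : ℕ) : Fin n)) (e.symm ((i+1 : ℕ) : Fin n))
    rw [hc]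
    refine e.symm.map_rel_iff.mpr ?_
    rw [cycleGraph_adj']
    right
    rw [add_sub_cancel_left, hval1]
  · intro i
    show e.symm ((i.val : ℕ) : Fin n) = e.symm i
    rw [Fin.cast_val_eq_self]

lemma strong_three_of_iso (hn : 3 ≤ n) (hodd : Odd n) (e : M ≃g cycleGraph n) :
    StrongChromChoosable M 3 := by
  haveI : NeZero n := ⟨by omega⟩
  obtain ⟨u, hclosed, hadj, hu⟩ := seq_of_iso hn e
  constructor
  · -- chromatic number = 3
    have hle : M.chromaticNumber ≤ 3 := by
      refine Colorable.chromaticNumber_le ?_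
      obtain ⟨C⟩ := cycle_colorable_three hn
      exact ⟨Coloring.mk (fun v => C (e v)) (fun {v w} h => C.valid (e.map_rel_iff.mpr h))⟩
    have hge : 3 ≤ M.chromaticNumber := by
      obtain ⟨p, hp⟩ := walk_of_seq u n (fun i hi => hadj i)
      refine Walk.three_le_chromaticNumber_of_odd_loop (p.copy rfl hclosed) ?_
      rwa [Walk.length_copy, hp]
    exact le_antisymm hle hge
  · intro L hcard hnocol
    have hcard2 : ∀ v, (L v).card = 2 := by intro v; have := hcard v; omega
    set L' : Fin n → Finset ℕ := fun i => L (e.symm i) with hL'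
    by_cases hch : ∀ i : Fin n, L' i = L' (i + 1)
    · have hcc := chain_const L' hch
      intro v w
      have h1 := hcc (e v) (e w)
      simp only [hL', RelIso.symm_apply_apply] at h1
      -- careful: e.symm (e v) = v
      exact h1
    · push_neg at hch
      obtain ⟨i₀, hne⟩ := hch
      obtain ⟨f, hf1, hf2⟩ := cycle_greedy hn L' (fun i => hcard2 _) hne
      exfalso
      apply hnocol
      refine ⟨fun v => f (e v), fun v => ?_, fun v w h => ?_⟩
      · have := hf1 (e v)
        simp only [hL', RelIso.symm_apply_apply] at this
        exact this
      · exact hf2 (e v) (e w) (e.map_rel_iff.mpr h)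

end IsoCycle

lemma of_strong_three {V : Type*} {M : SimpleGraph V} (hst : StrongChromChoosable M 3) :
    ∃ l : ℕ, 1 ≤ l ∧ Nonempty (M ≃g cycleGraph (2 * l + 1)) := by
  obtain ⟨hχ, hstrong⟩ := hst
  have hstrong2 : ∀ L : V → Finset ℕ, (∀ v, (L v).card = 2) →
      (¬ ∃ f, IsProperListColoring M L f) → ∀ v w, L v = L w := by
    intro L h
    exact hstrong L (fun v => by have := h v; omega)
  have hnc2 : ¬ M.Colorable 2 := by
    intro h
    have h2 := h.chromaticNumber_le
    rw [hχ] at h2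
    have : (3 : ℕ) ≤ 2 := by exact_mod_cast h2
    omega
  obtain ⟨n₀, u₀, h₀1, h₀2, h₀3⟩ := exists_oddClosedSeq hnc2
  set S : Set ℕ :=
    {m | Odd m ∧ ∃ u : ℕ → V, u m = u 0 ∧ ∀ i < m, M.Adj (u i) (u (i+1))} with hS
  have hSne : S.Nonempty := ⟨n₀, h₀1, u₀, h₀2, h₀3⟩
  set n := sInf S with hn
  obtain ⟨hodd, u, hclosed, hadj⟩ := Nat.sInf_mem hSne
  have hmin : ∀ (m : ℕ) (w : ℕ → V), Odd m → w m = w 0 →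
      (∀ i < m, M.Adj (w i) (w (i+1))) → n ≤ m :=
    fun m w h1 h2 h3 => Nat.sInf_le ⟨h1, w, h2, h3⟩
  have hn3 : 3 ≤ n := by
    by_contra hh
    have hn1 : n = 1 := by
      rcases hodd with ⟨t, ht⟩
      omega
    have := hadj 0 (by omega)
    rw [show (0:ℕ)+1 = n by omega, hclosed] at this
    exact M.irrefl this
  have hsurj := support_eq_univ hstrong2 hodd hclosed hadj
  have hinj := claimB hodd hclosed hadj hmin
  have hbij : Function.Bijective (fun k : Fin n => u k.val) := by
    constructor
    · intro a b hab
      by_contra hne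
      rcases Nat.lt_trichotomy a.val b.val with h|h|h
      · exact hinj a.val b.val h b.isLt hab
      · exact hne (Fin.ext h)
      · exact hinj b.val a.val h a.isLt hab.symm
    · intro x
      obtain ⟨i, hi, hx⟩ := hsurj x
      exact ⟨⟨i, hi⟩, hx⟩
  set e0 := Equiv.ofBijective _ hbij with he0def
  have he0 : ∀ a : Fin n, e0 a = u a.val := fun a => rfl
  have hiff : ∀ a b : Fin n, (cycleGraph n).Adj a b ↔ M.Adj (u a.val) (u b.val) := by
    intro a b
    have hb := b.isLt
    have ha := a.isLt
    rw [cycleGraph_adj_iff (by omega : 2 ≤ n)]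
    constructor
    · rintro (h|h|⟨h1,h2⟩|⟨h1,h2⟩)
      · rw [h]; exact hadj a.val (by omega)
      · rw [h]; exact (hadj b.val (by omega)).symm
      · rw [h1, h2]
        have hh := hadj (n-1) (by omega)
        rw [show n-1+1 = n by omega, hclosed] at hh
        exact hh.symm
      · rw [h1, h2]
        have hh := hadj (n-1) (by omega)
        rw [show n-1+1 = n by omega, hclosed] at hh
        exact hh
    · intro hAdj
      have hne : a.val ≠ b.val := by
        intro h
        rw [h] at hAdj
        exact M.irrefl hAdj
      rcases Nat.lt_or_ge a.val b.val with h|h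
      · rcases claimC hodd hclosed hadj hmin h b.isLt hAdj with h2|⟨h2,h3⟩ <;> omega
      · have h' : b.val < a.val := by omega
        rcases claimC hodd hclosed hadj hmin h' a.isLt hAdj.symm with h2|⟨h2,h3⟩ <;> omega
  have iso : M ≃g cycleGraph n := by
    refine ⟨e0.symm, ?_⟩
    intro x y
    rw [hiff (e0.symm x) (e0.symm y), ← he0 (e0.symm x), ← he0 (e0.symm y),
      Equiv.apply_symm_apply, Equiv.apply_symm_apply]
  obtain ⟨l, hl⟩ := hodd
  exact ⟨l, by omega, ⟨hl ▸ iso⟩⟩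

lemma of_strong_two {V : Type*} {M : SimpleGraph V} (hst : StrongChromChoosable M 2) :
    Nonempty (M ≃g (⊤ : SimpleGraph (Fin 2))) := by
  classical
  obtain ⟨hχ, hstrong⟩ := hst
  have hedge : ∃ u w, M.Adj u w := by
    by_contra h
    push_neg at h
    have hcol : M.Colorable 1 :=
      ⟨Coloring.mk (fun _ => 0) (fun {v w} hvw => absurd hvw (h v w))⟩
    have h2 := hcol.chromaticNumber_le
    rw [hχ] at h2
    have : (2 : ℕ) ≤ 1 := by exact_mod_cast h2
    omega
  obtain ⟨a, b, hab⟩ := hedge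
  have hall : ∀ x : V, x = a ∨ x = b := by
    by_contra h
    push_neg at h
    obtain ⟨x, hxa, hxb⟩ := h
    set L : V → Finset ℕ := fun y => if y = x then {1} else {0} with hL
    have hc : ∀ v, (L v).card = 2 - 1 := by
      intro v; simp only [hL]; split_ifs <;> rfl
    have hnc : ¬ ∃ f, IsProperListColoring M L f := by
      rintro ⟨f, hf1, hf2⟩
      have hfa : f a = 0 := by
        have := hf1 a
        simp only [hL, if_neg (fun hh => hxa hh.symm : ¬ a = x)] at this
        simpa using this
      have hfb : f b = 0 := by
        have := hf1 b
        simp only [hL, if_neg (fun hh => hxb hh.symm : ¬ b = x)] at this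
        simpa using this
      exact hf2 hab (by rw [hfa, hfb])
    have heq := hstrong L hc hnc x a
    simp only [hL, if_pos rfl, if_neg (fun hh => hxa hh.symm : ¬ a = x)] at heq
    have : (1 : ℕ) = 0 := Finset.singleton_injective heq
    omega
  have hne : a ≠ b := hab.ne
  set φ : V → Fin 2 := fun y => if y = a then 0 else 1 with hφ
  set ψ : Fin 2 → V := fun i => if i = 0 then a else b with hψ
  have hequiv : Function.LeftInverse ψ φ ∧ Function.RightInverse ψ φ := by
    constructor
    · intro y
      rcases hall y with h|h <;> subst h
      · simp only [hφ, hψ, if_pos rfl]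
      · simp only [hφ, hψ, if_neg hne.symm]
        norm_num
    · intro i
      fin_cases i
      · show φ (ψ 0) = 0
        simp only [hψ, hφ, if_pos rfl]
      · show φ (ψ 1) = 1
        simp only [hψ, hφ]
        rw [if_neg (by norm_num : ¬ (1 : Fin 2) = 0), if_neg (Ne.symm hne)]
  set E : V ≃ Fin 2 := ⟨φ, ψ, hequiv.1, hequiv.2⟩ with hE
  refine ⟨⟨E, ?_⟩⟩
  intro x y
  simp only [top_adj]
  constructor
  · intro hxy
    have hxyne : x ≠ y := fun h => hxy (by rw [h])
    rcases hall x with hx|hx <;> rcases hall y with hy|hy <;> subst hx <;> subst hy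
    · exact absurd rfl hxyne
    · exact hab
    · exact hab.symm
    · exact absurd rfl hxyne
  · intro hxy
    have : x ≠ y := hxy.ne
    exact fun h => this (E.injective h)

lemma strong_two_of_iso {V : Type*} {M : SimpleGraph V}
    (e : M ≃g (⊤ : SimpleGraph (Fin 2))) : StrongChromChoosable M 2 := by
  classical
  constructor
  · have hle : M.chromaticNumber ≤ 2 := by
      refine Colorable.chromaticNumber_le ?_
      exact ⟨Coloring.mk (fun v => e v) (fun {v w} h => (e.map_rel_iff.mpr h).ne)⟩
    have hge : (2 : ℕ∞) ≤ M.chromaticNumber := by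
      have h1 := chromaticNumber_mono_of_hom e.symm.toEmbedding.toHom
      rw [chromaticNumber_top, Fintype.card_fin] at h1
      exact_mod_cast h1
    exact le_antisymm hle hge
  · intro L hcard hnocol
    set a := e.symm 0 with ha
    set b := e.symm 1 with hb
    have hADJ : M.Adj a b := e.symm.map_rel_iff.mpr (by norm_num)
    have hne : a ≠ b := hADJ.ne
    have hall : ∀ v : V, v = a ∨ v = b := by
      intro v
      have h2 : e v = 0 ∨ e v = 1 := by
        rcases (e v : Fin 2) with ⟨k, hk⟩
        interval_cases k
        · left; rfl
        · right; rfl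
      rcases h2 with h|h
      · left; rw [ha, ← h, RelIso.symm_apply_apply]
      · right; rw [hb, ← h, RelIso.symm_apply_apply]
    obtain ⟨ca, hca⟩ := Finset.card_eq_one.mp (hcard a)
    obtain ⟨cb, hcb⟩ := Finset.card_eq_one.mp (hcard b)
    have hLab : L a = L b := by
      by_contra hLab
      have hcane : ca ≠ cb := by
        intro h
        exact hLab (by rw [hca, hcb, h])
      apply hnocol
      refine ⟨fun v => if v = a then ca else cb, ?_, ?_⟩
      · intro v
        rcases hall v with h|h <;> subst h
        · show (if a = a then ca else cb) ∈ L a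
          rw [if_pos rfl, hca]; exact Finset.mem_singleton_self ca
        · show (if b = a then ca else cb) ∈ L b
          rw [if_neg (Ne.symm hne), hcb]; exact Finset.mem_singleton_self cb
      · intro v w hvw
        have hvwne : v ≠ w := hvw.ne
        rcases hall v with hv|hv <;> rcases hall w with hw|hw <;> subst hv <;> subst hw
        · exact absurd rfl hvwne
        · show (if a = a then ca else cb) ≠ (if b = a then ca else cb)
          rw [if_pos rfl, if_neg (Ne.symm hne)]; exact hcane
        · show (if b = a then ca else cb) ≠ (if a = a then ca else cb)
          rw [if_pos rfl, if_neg (Ne.symm hne)]; exact hcane.symm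
        · exact absurd rfl hvwne
    intro v w
    rcases hall v with hv|hv <;> rcases hall w with hw|hw <;> subst hv <;> subst hw <;>
      simp [hLab]

end AuxStrongChrom

theorem strongChromChoosable_two_three_iff {V : Type*} [Fintype V] [Nonempty V]
    (M : SimpleGraph V) :
    (StrongChromChoosable M 2 ↔ Nonempty (M ≃g (⊤ : SimpleGraph (Fin 2)))) ∧
    (StrongChromChoosable M 3 ↔ ∃ l : ℕ, 1 ≤ l ∧ Nonempty (M ≃g cycleGraph (2 * l + 1))) := by
  constructor
  · constructor
    · exact fun h => of_strong_two h
    · rintro ⟨e⟩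
      exact strong_two_of_iso e
  · constructor
    · exact fun h => of_strong_three h
    · rintro ⟨l, hl, ⟨e⟩⟩
      exact strong_three_of_iso (by omega) ⟨l, by ring⟩ e
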